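/- Let X be an essential, cocompact, locally finite, Euclidean CAT(0) cube complex of Euclidean dimension 1 (i.e., X contains an Aut(X)-invariant geodesic line and no invariant flat of higher dimension). Then every hyperplane of X has finite diameter, every ultrafilter in ∂X is non-terminating, ∂X = B(X), X has caged hyperplanes, and X contains no tight cage. -/

import Mathlib

/-- Abstract combinatorial model of a CAT(0) cube complex:
vertices of the 1-skeleton, adjacency, and the collection of halfspaces
(as vertex sets). -/
structure CCC where
  V : Type
  adj : V → V → Prop
  HS : Set (Set V)

namespace CCC

variable (X : CCC)

/-- Combinatorial walks in the 1-skeleton. -/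
inductive Walk : X.V → X.V → ℕ → Prop
  | nil (v : X.V) : Walk v v 0
  | cons {u v w : X.V} {n : ℕ} : X.adj u v → Walk v w n → Walk u w (n + 1)

/-- Combinatorial distance in the 1-skeleton. -/
noncomputable def edist (u v : X.V) : ℕ∞ :=
  sInf {n : ℕ∞ | ∃ m : ℕ, n = (m : ℕ∞) ∧ Walk X u v m}

/-- Axioms of a CAT(0) cube complex (median-graph/pocset formulation):
symmetric irreflexive adjacency, halfspaces closed under complement,
each edge is separated by a unique wall, and the complex is connected. -/
def IsCubical : Prop :=
  (∀ u v : X.V, X.adj u v → X.adj v u) ∧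
  (∀ v : X.V, ¬ X.adj v v) ∧
  (∀ h ∈ X.HS, hᶜ ∈ X.HS) ∧
  (∀ u v : X.V, X.adj u v → ∃ h ∈ X.HS, u ∈ h ∧ v ∉ h ∧
    ∀ k ∈ X.HS, u ∈ k → v ∉ k → k = h) ∧
  (∀ u v : X.V, ∃ n : ℕ, Walk X u v n)

/-- Locally finite: every vertex has finitely many neighbours. -/
def LocFin : Prop := ∀ v : X.V, {u : X.V | X.adj v u}.Finite

/-- The edge (u,v) is dual to the hyperplane ĥ of the halfspace h. -/
def DualTo (h : Set X.V) (u v : X.V) : Prop :=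
  X.adj u v ∧ ((u ∈ h ∧ v ∉ h) ∨ (v ∈ h ∧ u ∉ h))

/-- The hyperplanes ĥ and k̂ intersect (cross). -/
def Cross (h k : Set X.V) : Prop :=
  (h ∩ k).Nonempty ∧ (h ∩ kᶜ).Nonempty ∧ (hᶜ ∩ k).Nonempty ∧ (hᶜ ∩ kᶜ).Nonempty

/-- h and k determine the same hyperplane. -/
def SameHyp (h k : Set X.V) : Prop := k = h ∨ k = hᶜ

/-- Positive carrier C⁺(h): vertices of h adjacent to an edge dual to ĥ. -/
def carrier (h : Set X.V) : Set X.V :=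
  {v : X.V | v ∈ h ∧ ∃ u : X.V, X.adj v u ∧ u ∉ h}

/-- The hyperplane ĥ is contained in the set k: ĥ has a dual edge,
and every edge dual to ĥ has both endpoints in k. -/
def HypIn (h k : Set X.V) : Prop :=
  (∃ u v : X.V, X.DualTo h u v) ∧ ∀ u v : X.V, X.DualTo h u v → u ∈ k ∧ v ∈ k

/-- An ultrafilter on X: a choice of one halfspace from each complementary
pair, upward closed under inclusion. -/
def IsUltra (α : Set (Set X.V)) : Prop :=
  α ⊆ X.HS ∧ (∀ h ∈ X.HS, (h ∈ α ↔ hᶜ ∉ α)) ∧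
  (∀ h ∈ α, ∀ k ∈ X.HS, h ⊆ k → k ∈ α)

/-- α fails the descending chain condition, i.e. α ∈ ∂X (the Roller boundary):
α contains an infinite strictly descending chain of halfspaces. -/
def InRoller (α : Set (Set X.V)) : Prop :=
  ∃ c : ℕ → Set X.V, (∀ n, c n ∈ α) ∧ ∀ n, c (n + 1) ⊂ c n

/-- A cage: a set of halfspaces whose positive carriers have a common point. -/
def Cage (K : Set (Set X.V)) : Prop :=
  K ⊆ X.HS ∧ (⋂ k ∈ K, X.carrier k).Nonempty

/-- X has caged hyperplanes: for every ultrafilter α ∈ ∂X and every cage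
K ⊆ α, the intersection ⋂_{k∈K} k contains a hyperplane. -/
def CagedHyperplanes : Prop :=
  ∀ α : Set (Set X.V), X.IsUltra α → X.InRoller α →
    ∀ K ⊆ α, X.Cage K → ∃ h ∈ X.HS, ∀ k ∈ K, X.HypIn h k

/-- Non-terminating ultrafilter: every halfspace of α properly contains
another halfspace of α. -/
def NonTerminating (α : Set (Set X.V)) : Prop :=
  X.IsUltra α ∧ ∀ h ∈ α, ∃ k ∈ α, k ⊂ h

/-- α ∈ B(X): α is an ultrafilter in the closure of the set of
non-terminating ultrafilters (every basic neighbourhood U_H, H a finite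
subset of α, contains a non-terminating ultrafilter). -/
def InBX (α : Set (Set X.V)) : Prop :=
  X.IsUltra α ∧ ∀ H ⊆ α, H.Finite → ∃ β : Set (Set X.V), X.NonTerminating β ∧ H ⊆ β

/-- Straight links: at every vertex, every edge admits another adjacent edge
whose dual hyperplane is distinct from, and does not cross, its own. -/
def StraightLinks : Prop :=
  ∀ v u : X.V, X.adj v u → ∀ h ∈ X.HS, X.DualTo h v u →
    ∃ w : X.V, X.adj v w ∧ ∃ k ∈ X.HS, X.DualTo k v w ∧ ¬ X.SameHyp h k ∧ ¬ X.Cross h k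

/-- Essential: every halfspace contains vertices arbitrarily far from its
hyperplane (i.e. from every vertex of an edge dual to it). -/
def Essential : Prop :=
  ∀ h ∈ X.HS, ∀ R : ℕ, ∃ w ∈ h, ∀ u v : X.V, X.DualTo h u v → (R : ℕ∞) < X.edist w u

/-- p is a combinatorial geodesic: an edge path of minimal length among all
edge paths with the same endpoints. -/
def IsGeo (p : List X.V) : Prop :=
  p.Chain' X.adj ∧ ∀ q : List X.V, q.Chain' X.adj →
    q.head? = p.head? → q.getLast? = p.getLast? → p.length ≤ q.length

/-- Convex subcomplex (on vertices): contains every geodesic between its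
vertices. -/
def Convex (Y : Set X.V) : Prop :=
  ∀ p : List X.V, X.IsGeo p →
    (∃ u ∈ Y, p.head? = some u) → (∃ v ∈ Y, p.getLast? = some v) →
    ∀ w ∈ p, w ∈ Y

/-- Y has unbounded diameter. -/
def Unbounded (Y : Set X.V) : Prop :=
  ∀ D : ℕ, ∃ u ∈ Y, ∃ v ∈ Y, (D : ℕ∞) < X.edist u v

/-- The core of a (tight) cage (S,T). -/
def core (S T : Set (Set X.V)) : Set X.V :=
  (⋂ t ∈ T, X.carrier t) ∩ (⋂ s ∈ S, s)

/-- Tight cage (S,T): finite families of halfspaces with |T| ≥ 2, every ŝ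
(s ∈ S) meeting every hyperplane of S ∪ T, unbounded core, and every
hyperplane dual to an edge adjacent to the core either lying in Ŝ ∪ T̂ or
crossing every hyperplane of T̂. -/
def IsTightCage (S T : Set (Set X.V)) : Prop :=
  S ⊆ X.HS ∧ T ⊆ X.HS ∧ S.Finite ∧ T.Finite ∧ 2 ≤ T.ncard ∧
  (∀ s ∈ S, ∀ h ∈ S ∪ T, X.SameHyp s h ∨ X.Cross s h) ∧
  X.Unbounded (X.core S T) ∧
  (∀ h ∈ X.HS, ∀ u v : X.V, u ∈ X.core S T → X.DualTo h u v →
    ((∃ k ∈ S ∪ T, X.SameHyp k h) ∨ ∀ t ∈ T, X.Cross h t))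

/-- 2-dimensional: no three pairwise crossing hyperplanes. -/
def Dim2 : Prop :=
  ∀ h ∈ X.HS, ∀ k ∈ X.HS, ∀ l ∈ X.HS, ¬ (X.Cross h k ∧ X.Cross h l ∧ X.Cross k l)

/-- Automorphisms of X. -/
structure AutCC where
  e : X.V ≃ X.V
  adj_iff : ∀ u v : X.V, X.adj (e u) (e v) ↔ X.adj u v
  hs : ∀ h ∈ X.HS, e '' h ∈ X.HS

/-- Cocompact: finitely many orbits of vertices under Aut(X). -/
def Cocompact : Prop :=
  ∃ F : Set X.V, F.Finite ∧ ∀ v : X.V, ∃ g : X.AutCC, ∃ u ∈ F, g.e u = v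

end CCC

/-- X contains an Aut(X)-invariant (combinatorial) geodesic line. -/
def InvariantLine (X : CCC) : Prop :=
  ∃ f : ℤ → X.V, (∀ m n : ℤ, X.edist (f m) (f n) = ((m - n).natAbs : ℕ∞)) ∧
    ∀ g : X.AutCC, ∀ n : ℤ, g.e (f n) ∈ Set.range f

/-- X contains an Aut(X)-invariant n-dimensional (combinatorial, ℓ¹) flat. -/
def InvariantFlat (X : CCC) (n : ℕ) : Prop :=
  ∃ f : (Fin n → ℤ) → X.V,
    (∀ p q : Fin n → ℤ,
      X.edist (f p) (f q) = ((∑ i, (p i - q i).natAbs : ℕ) : ℕ∞)) ∧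
    ∀ g : X.AutCC, ∀ p, g.e (f p) ∈ Set.range f

namespace S13
open CCC

variable {X : CCC}

theorem walk_append {u v w : X.V} {m n : ℕ} (h1 : Walk X u v m) (h2 : Walk X v w n) :
    Walk X u w (m + n) := by
  induction h1 with
  | nil => simpa using h2
  | @cons a b c m' ha hw ih =>
    have : m' + 1 + n = m' + n + 1 := by omega
    rw [this]
    exact Walk.cons ha (ih h2)

/-- combinatorial distance, `ℕ`-valued -/
noncomputable def nd (X : CCC) (u v : X.V) : ℕ := sInf {n | Walk X u v n}

theorem walk_nd (hc : ∀ u v : X.V, ∃ n, Walk X u v n) (u v : X.V) :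
    Walk X u v (nd X u v) := Nat.sInf_mem (hc u v)

theorem nd_le {u v : X.V} {n : ℕ} (h : Walk X u v n) : nd X u v ≤ n := Nat.sInf_le h

theorem nd_self (u : X.V) : nd X u u = 0 := Nat.le_zero.mp (nd_le (Walk.nil u))

theorem nd_triangle (hc : ∀ u v : X.V, ∃ n, Walk X u v n) (u v w : X.V) :
    nd X u w ≤ nd X u v + nd X v w :=
  nd_le (walk_append (walk_nd hc u v) (walk_nd hc v w))

theorem walk_symm (hsym : ∀ u v : X.V, X.adj u v → X.adj v u) {u v : X.V} {n : ℕ}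
    (h : Walk X u v n) : Walk X v u n := by
  induction h with
  | nil => exact .nil _
  | cons ha _ ih => exact walk_append ih (Walk.cons (hsym _ _ ha) (Walk.nil _))

theorem nd_symm (hsym : ∀ u v : X.V, X.adj u v → X.adj v u)
    (hc : ∀ u v : X.V, ∃ n, Walk X u v n) (u v : X.V) : nd X u v = nd X v u :=
  le_antisymm (nd_le (walk_symm hsym (walk_nd hc v u)))
    (nd_le (walk_symm hsym (walk_nd hc u v)))

theorem nd_adj {u v : X.V} (h : X.adj u v) : nd X u v ≤ 1 :=
  nd_le (Walk.cons h (Walk.nil _))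

theorem adj_of_walk_one {u v : X.V} (h : Walk X u v 1) : X.adj u v := by
  cases h with
  | cons ha hw => cases hw; exact ha

theorem edist_eq_nd (hc : ∀ u v : X.V, ∃ n, Walk X u v n) (u v : X.V) :
    X.edist u v = (nd X u v : ℕ∞) := by
  apply le_antisymm
  · exact sInf_le ⟨nd X u v, rfl, walk_nd hc u v⟩
  · apply le_sInf
    rintro b ⟨m, rfl, hw⟩
    exact_mod_cast nd_le hw

theorem dual_compl {h : Set X.V} {u v : X.V} : X.DualTo hᶜ u v ↔ X.DualTo h u v := by
  simp only [CCC.DualTo, Set.mem_compl_iff, not_not]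
  tauto

theorem mem_C_dual {h : Set X.V} {a : X.V}
    (ha : a ∈ X.carrier h ∪ X.carrier hᶜ) : ∃ b, X.DualTo h a b := by
  rcases ha with ⟨h1, b, hadj, hb⟩ | ⟨h1, b, hadj, hb⟩
  · exact ⟨b, hadj, Or.inl ⟨h1, hb⟩⟩
  · exact ⟨b, hadj, Or.inr ⟨by simpa using hb, h1⟩⟩

theorem dual_mem_C (hsym : ∀ u v : X.V, X.adj u v → X.adj v u) {h : Set X.V} {u v : X.V}
    (hd : X.DualTo h u v) :
    u ∈ X.carrier h ∪ X.carrier hᶜ ∧ v ∈ X.carrier h ∪ X.carrier hᶜ := by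
  obtain ⟨hadj, hp⟩ := hd
  rcases hp with ⟨hu, hv⟩ | ⟨hv, hu⟩
  · exact ⟨Or.inl ⟨hu, v, hadj, hv⟩, Or.inr ⟨hv, u, hsym _ _ hadj, by simpa using hu⟩⟩
  · exact ⟨Or.inr ⟨hu, v, hadj, by simpa using hv⟩, Or.inl ⟨hv, u, hsym _ _ hadj, hu⟩⟩

theorem C_compl (h : Set X.V) :
    X.carrier hᶜ ∪ X.carrier hᶜᶜ = X.carrier h ∪ X.carrier hᶜ := by
  rw [compl_compl, Set.union_comm]

theorem exists_cross (hc : ∀ u v : X.V, ∃ n, Walk X u v n) {h : Set X.V} {n : ℕ} {u v : X.V}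
    (hw : Walk X u v n) (h1 : u ∈ h) (h2 : v ∉ h) :
    ∃ a b, X.adj a b ∧ a ∈ h ∧ b ∉ h ∧ nd X u a ≤ n := by
  induction hw with
  | nil => exact absurd h1 h2
  | @cons u x w n ha hw ih =>
    by_cases hxm : x ∈ h
    · obtain ⟨a, b, h3, h4, h5, h6⟩ := ih hxm h2
      refine ⟨a, b, h3, h4, h5, ?_⟩
      have := nd_triangle hc u x a
      have := nd_adj ha
      omega
    · exact ⟨u, x, ha, h1, hxm, by simp [nd_self]⟩

theorem cross_nd (hc : ∀ u v : X.V, ∃ n, Walk X u v n) {h : Set X.V} {x y : X.V}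
    (hx : x ∈ h) (hy : y ∉ h) :
    ∃ a b, X.DualTo h a b ∧ a ∈ h ∧ b ∉ h ∧ nd X x a ≤ nd X x y := by
  obtain ⟨a, b, h1, h2, h3, h4⟩ := exists_cross hc (walk_nd hc x y) hx hy
  exact ⟨a, b, ⟨h1, Or.inl ⟨h2, h3⟩⟩, h2, h3, h4⟩

/-- adjacency-preserving bijection -/
def AdjPres (X : CCC) (e : X.V ≃ X.V) : Prop := ∀ u v, X.adj (e u) (e v) ↔ X.adj u v

theorem adjpres_symm {e : X.V ≃ X.V} (he : AdjPres X e) : AdjPres X e.symm := by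
  intro u v
  have := he (e.symm u) (e.symm v)
  simpa using this.symm

theorem walk_map {e : X.V ≃ X.V} (he : AdjPres X e) {u v : X.V} {n : ℕ}
    (h : Walk X u v n) : Walk X (e u) (e v) n := by
  induction h with
  | nil => exact .nil _
  | cons ha _ ih => exact Walk.cons ((he _ _).mpr ha) ih

theorem nd_map (hc : ∀ u v : X.V, ∃ n, Walk X u v n) {e : X.V ≃ X.V} (he : AdjPres X e)
    (u v : X.V) : nd X (e u) (e v) = nd X u v := by
  apply le_antisymm (nd_le (walk_map he (walk_nd hc u v)))
  have w := walk_map (adjpres_symm he) (walk_nd hc (e u) (e v))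
  rw [Equiv.symm_apply_apply, Equiv.symm_apply_apply] at w
  exact nd_le w

theorem image_carrier {e : X.V ≃ X.V} (he : AdjPres X e) (h : Set X.V) :
    X.carrier (e '' h) = e '' X.carrier h := by
  ext x
  simp only [CCC.carrier, Set.mem_setOf_eq, Set.mem_image]
  constructor
  · rintro ⟨⟨a, ha, rfl⟩, u, hadj, hu⟩
    refine ⟨a, ⟨ha, e.symm u, ?_, fun hmem => hu ⟨_, hmem, by simp⟩⟩, rfl⟩
    exact (he a (e.symm u)).mp (by rwa [Equiv.apply_symm_apply])
  · rintro ⟨a, ⟨ha, u, hadj, hu⟩, rfl⟩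
    refine ⟨⟨a, ha, rfl⟩, e u, (he a u).mpr hadj, ?_⟩
    rintro ⟨b, hb, hbe⟩
    exact hu (by rwa [e.injective hbe] at hb)

theorem image_compl (e : X.V ≃ X.V) (h : Set X.V) : e '' hᶜ = (e '' h)ᶜ := by
  rw [Set.image_compl_eq e.bijective]

/-- bundled cube-complex axioms -/
structure Ctx (X : CCC) where
  hsym : ∀ u v : X.V, X.adj u v → X.adj v u
  hcompl : ∀ h ∈ X.HS, hᶜ ∈ X.HS
  hwall : ∀ u v : X.V, X.adj u v → ∃ h ∈ X.HS, u ∈ h ∧ v ∉ h ∧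
    ∀ k ∈ X.HS, u ∈ k → v ∉ k → k = h
  hconn : ∀ u v : X.V, ∃ n, Walk X u v n
  hess : X.Essential

noncomputable def Ctx.wall (c : Ctx X) {u v : X.V} (h : X.adj u v) : Set X.V :=
  (c.hwall u v h).choose

theorem Ctx.wall_mem (c : Ctx X) {u v : X.V} (h : X.adj u v) : c.wall h ∈ X.HS :=
  (c.hwall u v h).choose_spec.1

theorem Ctx.wall_src (c : Ctx X) {u v : X.V} (h : X.adj u v) : u ∈ c.wall h :=
  (c.hwall u v h).choose_spec.2.1

theorem Ctx.wall_tgt (c : Ctx X) {u v : X.V} (h : X.adj u v) : v ∉ c.wall h :=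
  (c.hwall u v h).choose_spec.2.2.1

theorem Ctx.wall_uniq (c : Ctx X) {u v : X.V} (h : X.adj u v) {k : Set X.V}
    (hk : k ∈ X.HS) (hu : u ∈ k) (hv : v ∉ k) : k = c.wall h :=
  (c.hwall u v h).choose_spec.2.2.2 k hk hu hv

theorem Ctx.ess_nd (c : Ctx X) {h : Set X.V} (hh : h ∈ X.HS) (R : ℕ) :
    ∃ w ∈ h, ∀ u v : X.V, X.DualTo h u v → R < nd X w u := by
  obtain ⟨w, hw, hfar⟩ := c.hess h hh R
  refine ⟨w, hw, fun u v hd => ?_⟩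
  have := hfar u v hd
  rw [edist_eq_nd c.hconn] at this
  exact_mod_cast this

theorem Ctx.mem_nonempty (c : Ctx X) {h : Set X.V} (hh : h ∈ X.HS) : ∃ w, w ∈ h := by
  obtain ⟨w, hw, -⟩ := c.ess_nd hh 0
  exact ⟨w, hw⟩

/-- line context: geodesic line plus cocompactness constant -/
structure LCtx (X : CCC) extends Ctx X where
  f : ℤ → X.V
  M : ℕ
  hf : ∀ m n : ℤ, nd X (f m) (f n) = (m - n).natAbs
  hM : ∀ v : X.V, ∃ n : ℤ, nd X v (f n) ≤ M

theorem LCtx.adj_line (L : LCtx X) (n : ℤ) : X.adj (L.f (n + 1)) (L.f n) := by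
  have h1 : nd X (L.f (n + 1)) (L.f n) = 1 := by
    rw [L.hf]; simp
  have := walk_nd L.hconn (L.f (n + 1)) (L.f n)
  rw [h1] at this
  exact adj_of_walk_one this

theorem LCtx.adj_line' (L : LCtx X) (n : ℤ) : X.adj (L.f n) (L.f (n + 1)) :=
  L.hsym _ _ (L.adj_line n)

theorem exists_M (c : Ctx X) (hcc : X.Cocompact) {f : ℤ → X.V}
    (hf : ∀ m n : ℤ, X.edist (f m) (f n) = ((m - n).natAbs : ℕ∞))
    (hinv : ∀ g : X.AutCC, ∀ n : ℤ, g.e (f n) ∈ Set.range f) :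
    ∃ M : ℕ, ∀ v : X.V, ∃ n : ℤ, nd X v (f n) ≤ M := by
  obtain ⟨F, hFfin, hF⟩ := hcc
  have hbd : ∃ M : ℕ, ∀ u ∈ F, nd X u (f 0) ≤ M := by
    obtain ⟨M, hM⟩ := (hFfin.image (fun u => nd X u (f 0))).bddAbove
    exact ⟨M, fun u hu => hM ⟨u, hu, rfl⟩⟩
  obtain ⟨M, hMF⟩ := hbd
  refine ⟨M, fun v => ?_⟩
  obtain ⟨g, u, huF, hgu⟩ := hF v
  obtain ⟨m, hm⟩ := hinv g 0
  refine ⟨m, ?_⟩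
  have heq : nd X (g.e u) (g.e (f 0)) = nd X u (f 0) := nd_map c.hconn g.adj_iff u (f 0)
  rw [hgu, ← hm] at heq
  rw [heq]
  exact hMF u huF

theorem LCtx.line_affine (L : LCtx X)
    (hinv : ∀ g : X.AutCC, ∀ n : ℤ, g.e (L.f n) ∈ Set.range L.f) (g : X.AutCC) :
    ∃ s ε : ℤ, ε.natAbs = 1 ∧ ∀ n : ℤ, g.e (L.f n) = L.f (s + ε * n) := by
  choose σ hσ using hinv g
  have hiso : ∀ m n : ℤ, (σ m - σ n).natAbs = (m - n).natAbs := by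
    intro m n
    have h2 : nd X (L.f (σ m)) (L.f (σ n)) = nd X (L.f m) (L.f n) := by
      rw [hσ, hσ]
      exact nd_map L.hconn g.adj_iff _ _
    rw [L.hf, L.hf] at h2
    exact h2
  refine ⟨σ 0, σ 1 - σ 0, by have := hiso 1 0; omega, fun n => ?_⟩
  have h1 := hiso n 0
  have h2 := hiso n 1
  have h3 := hiso 1 0
  have key : σ n = σ 0 + (σ 1 - σ 0) * n := by
    have he2 : σ 1 - σ 0 = 1 ∨ σ 1 - σ 0 = -1 := by omega
    rcases he2 with he2 | he2 <;> rw [he2] <;> omega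
  rw [← hσ n, key]

theorem bounded_C (L : LCtx X) (hlf : X.LocFin) (hcc : X.Cocompact)
    (hinv : ∀ g : X.AutCC, ∀ n : ℤ, g.e (L.f n) ∈ Set.range L.f)
    {h₀ : Set X.V} (hh : h₀ ∈ X.HS) :
    ∃ D : ℕ, ∀ u ∈ X.carrier h₀ ∪ X.carrier h₀ᶜ, ∀ v ∈ X.carrier h₀ ∪ X.carrier h₀ᶜ,
      nd X u v ≤ D := by
  classical
  by_contra hbd
  push_neg at hbd
  set C := X.carrier h₀ ∪ X.carrier h₀ᶜ with hCdef
  set M := L.M with hMdef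
  obtain ⟨F, hFfin, hF⟩ := hcc
  -- carrier vertices at arbitrarily far line positions
  have hfar : ∀ n : ℕ, ∃ x ∈ C, ∃ p : ℤ, nd X x (L.f p) ≤ M ∧ n < p.natAbs := by
    intro n
    obtain ⟨u, hu, v, hv, hd⟩ := hbd (2 * n + 4 * M + 2)
    obtain ⟨pu, hpu⟩ := L.hM u
    obtain ⟨pv, hpv⟩ := L.hM v
    have ht1 : nd X u v ≤ nd X u (L.f pu) + nd X (L.f pu) v := nd_triangle L.hconn _ _ _
    have ht2 : nd X (L.f pu) v ≤ nd X (L.f pu) (L.f pv) + nd X (L.f pv) v :=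
      nd_triangle L.hconn _ _ _
    have ht3 : nd X (L.f pv) v = nd X v (L.f pv) := nd_symm L.hsym L.hconn _ _
    have ht4 : nd X (L.f pu) (L.f pv) = (pu - pv).natAbs := L.hf _ _
    by_cases hcase : n < pu.natAbs
    · exact ⟨u, hu, pu, hpu, hcase⟩
    · exact ⟨v, hv, pv, hpv, by omega⟩
  -- per-n data
  have hdata : ∀ n : ℕ, ∃ (g : X.AutCC) (u b : X.V) (s ε pu p : ℤ),
      u ∈ F ∧ X.adj u b ∧ ε.natAbs = 1 ∧ (∀ m : ℤ, g.e (L.f m) = L.f (s + ε * m)) ∧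
      (∀ k : Set X.V, k ∈ X.HS → u ∈ k → b ∉ k → g.e '' k = h₀ ∨ g.e '' k = h₀ᶜ) ∧
      nd X u (L.f pu) ≤ M ∧ (s + ε * pu - p).natAbs ≤ 2 * M ∧ n < p.natAbs := by
    intro n
    obtain ⟨x, hxC, p, hxp, hpn⟩ := hfar n
    obtain ⟨y, hdxy⟩ := mem_C_dual hxC
    obtain ⟨g, u, huF, hgu⟩ := hF x
    set b := g.e.symm y with hbdef
    have hadj_ub : X.adj u b := by
      have h1 : X.adj (g.e u) (g.e b) := by
        rw [hgu, hbdef, Equiv.apply_symm_apply]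
        exact hdxy.1
      exact (g.adj_iff u b).mp h1
    obtain ⟨s, ε, hε, hgf⟩ := L.line_affine hinv g
    obtain ⟨pu, hpu⟩ := L.hM u
    refine ⟨g, u, b, s, ε, pu, p, huF, hadj_ub, hε, hgf, ?_, hpu, ?_, hpn⟩
    · intro k hk hak hbk
      have himg : g.e '' k ∈ X.HS := g.hs k hk
      have hxk : x ∈ g.e '' k := ⟨u, hak, hgu⟩
      have hyk : y ∉ g.e '' k := by
        rintro ⟨b', hb', hb'e⟩
        have hbb : b' = b := by
          apply g.e.injective
          rw [hb'e, hbdef, Equiv.apply_symm_apply]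
        exact hbk (hbb ▸ hb')
      rcases hdxy.2 with ⟨hxh, hyh⟩ | ⟨hyh, hxh⟩
      · left
        have h1 := L.wall_uniq hdxy.1 hh hxh hyh
        have h2 := L.wall_uniq hdxy.1 himg hxk hyk
        rw [h2, ← h1]
      · right
        have hxh' : x ∈ h₀ᶜ := by simpa using hxh
        have hyh' : y ∉ h₀ᶜ := by simpa using hyh
        have h1 := L.wall_uniq hdxy.1 (L.hcompl h₀ hh) hxh' hyh'
        have h2 := L.wall_uniq hdxy.1 himg hxk hyk
        rw [h2, ← h1]
    · have h1 : nd X (g.e u) (g.e (L.f pu)) ≤ M := by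
        rw [nd_map L.hconn g.adj_iff]
        exact hpu
      rw [hgu, hgf pu] at h1
      have h2 : nd X (L.f (s + ε * pu)) (L.f p) ≤ 2 * M := by
        have ht1 : nd X (L.f (s + ε * pu)) (L.f p) ≤
            nd X (L.f (s + ε * pu)) x + nd X x (L.f p) := nd_triangle L.hconn _ _ _
        have ht2 : nd X (L.f (s + ε * pu)) x = nd X x (L.f (s + ε * pu)) :=
          nd_symm L.hsym L.hconn _ _
        omega
      rw [L.hf] at h2
      omega
  choose g u b s ε pu p hu hadj hε hgf hor hnd hsb hp using hdata
  -- pigeonhole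
  set EFin : Set (X.V × X.V) := {q | q.1 ∈ F ∧ X.adj q.1 q.2} with hEFdef
  have hEFin : EFin.Finite := by
    have hsub : EFin ⊆ ⋃ a ∈ F, (fun z => (a, z)) '' {z | X.adj a z} := by
      rintro ⟨a, z⟩ ⟨h1, h2⟩
      exact Set.mem_biUnion h1 ⟨z, h2, rfl⟩
    exact (Set.Finite.biUnion hFfin (fun a _ => (hlf a).image _)).subset hsub
  haveI : Finite ↥EFin := hEFin.to_subtype
  set dat : ℕ → ↥EFin × Bool × Bool := fun n =>
    (⟨(u n, b n), hu n, hadj n⟩,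
      if (g n).e '' (L.wall (hadj n)) = h₀ then true else false,
      if ε n = 1 then true else false) with hdatdef
  obtain ⟨d, hdfib⟩ := Finite.exists_infinite_fiber dat
  have hfib : (dat ⁻¹' {d}).Infinite := Set.infinite_coe_iff.mp hdfib
  obtain ⟨n1, hn1⟩ := hfib.nonempty
  obtain ⟨n2, hn2, hn2big⟩ := hfib.exists_gt ((p n1).natAbs + 6 * M + 1)
  have hdeq : dat n1 = dat n2 := by
    have e1 : dat n1 = d := hn1
    have e2 : dat n2 = d := hn2
    rw [e1, e2]
  have hueq : u n1 = u n2 := by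
    have := congrArg (fun z => z.1.1.1) hdeq
    simpa [hdatdef] using this
  have hbeq : b n1 = b n2 := by
    have := congrArg (fun z => z.1.1.2) hdeq
    simpa [hdatdef] using this
  have hεeq : ε n1 = ε n2 := by
    have hb2 := congrArg (fun z => z.2.2) hdeq
    simp only [hdatdef] at hb2
    by_cases h1 : ε n1 = 1 <;> by_cases h2 : ε n2 = 1 <;>
      simp [h1, h2] at hb2 ⊢ <;> first
        | rfl
        | (have e1 := hε n1; have e2 := hε n2; omega)
  -- same image halfspace
  set k1 := L.wall (hadj n1) with hk1def
  have hk2eq : L.wall (hadj n2) = k1 :=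
    (L.wall_uniq (hadj n2) (L.wall_mem (hadj n1))
      (by rw [← hueq]; exact L.wall_src (hadj n1))
      (by rw [← hbeq]; exact L.wall_tgt (hadj n1))).symm
  have hor1 := hor n1 k1 (L.wall_mem (hadj n1)) (L.wall_src (hadj n1)) (L.wall_tgt (hadj n1))
  have hor2 : (g n2).e '' k1 = h₀ ∨ (g n2).e '' k1 = h₀ᶜ := by
    have := hor n2 (L.wall (hadj n2)) (L.wall_mem (hadj n2)) (L.wall_src (hadj n2))
      (L.wall_tgt (hadj n2))
    rwa [hk2eq] at this
  have hboreq := congrArg (fun z => z.2.1) hdeq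
  simp only [hdatdef] at hboreq
  rw [hk2eq] at hboreq
  have hsame : ∃ h' : Set X.V, ((g n1).e '' k1 = h') ∧ ((g n2).e '' k1 = h') ∧
      (h' = h₀ ∨ h' = h₀ᶜ) := by
    rw [← hk1def] at hboreq
    by_cases hA : (g n1).e '' k1 = h₀ <;> by_cases hB : (g n2).e '' k1 = h₀
    · exact ⟨h₀, hA, hB, Or.inl rfl⟩
    · simp [hA, hB] at hboreq
    · simp [hA, hB] at hboreq
    · exact ⟨h₀ᶜ, hor1.resolve_left hA, hor2.resolve_left hB, Or.inr rfl⟩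
  obtain ⟨h', himg1, himg2, hh'⟩ := hsame
  -- the translation
  set ψ : X.V ≃ X.V := (g n1).e.symm.trans (g n2).e with hψdef
  have hψadj : AdjPres X ψ := by
    intro a a'
    have h1 := (g n2).adj_iff ((g n1).e.symm a) ((g n1).e.symm a')
    have h2 := adjpres_symm (X := X) (g n1).adj_iff a a'
    simpa [hψdef] using h1.trans h2
  have hψh' : ψ '' h' = h' := by
    have hcomp : ⇑ψ '' h' = ⇑(g n2).e '' (⇑(g n1).e.symm '' h') := by
      rw [hψdef, Equiv.coe_trans, Set.image_comp]
    rw [hcomp, show ⇑(g n1).e.symm '' h' = k1 from by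
      rw [← himg1, Equiv.symm_image_image], himg2]
  have hψh0 : ψ '' h₀ = h₀ := by
    rcases hh' with rfl | rfl
    · exact hψh'
    · have h2 := hψh'
      rw [image_compl ψ h₀] at h2
      exact compl_injective h2
  set cc : ℤ := s n2 - s n1 with hccdef
  have hψf : ∀ m : ℤ, ψ (L.f m) = L.f (m + cc) := by
    intro m
    have hε1 : ε n1 = 1 ∨ ε n1 = -1 := by have := hε n1; omega
    have h1 : (g n1).e (L.f (ε n1 * (m - s n1))) = L.f m := by
      rw [hgf n1]
      congr 1
      rcases hε1 with h | h <;> rw [h] <;> ring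
    have h2 : (g n1).e.symm (L.f m) = L.f (ε n1 * (m - s n1)) := by
      rw [← h1, Equiv.symm_apply_apply]
    have h3 : ψ (L.f m) = (g n2).e (L.f (ε n1 * (m - s n1))) := by
      rw [hψdef, Equiv.trans_apply, h2]
    rw [h3, hgf n2, ← hεeq]
    congr 1
    rcases hε1 with h | h <;> rw [h] <;> ring
  have hcne : cc ≠ 0 := by
    intro hc0
    have hs12 : s n1 = s n2 := by omega
    have hpu12 : (pu n1 - pu n2).natAbs ≤ 2 * M := by
      have h1 := hnd n1
      have h2 := hnd n2
      rw [hueq] at h1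
      have ht1 : nd X (L.f (pu n1)) (L.f (pu n2)) ≤
          nd X (L.f (pu n1)) (u n2) + nd X (u n2) (L.f (pu n2)) := nd_triangle L.hconn _ _ _
      have ht2 : nd X (L.f (pu n1)) (u n2) = nd X (u n2) (L.f (pu n1)) :=
        nd_symm L.hsym L.hconn _ _
      have ht3 := L.hf (pu n1) (pu n2)
      omega
    have hb1 := hsb n1
    have hb2 := hsb n2
    rw [hεeq] at hb1
    have hq1 := hp n1
    have hq2 := hp n2
    have hε2 : ε n2 = 1 ∨ ε n2 = -1 := by have := hε n2; omega
    rcases hε2 with h | h <;> rw [h] at hb1 hb2 <;> omega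
  -- recurrence of near-carrier positions
  have hCinv : ∀ x ∈ C, ψ x ∈ C ∧ ψ.symm x ∈ C := by
    intro x hx
    have hcar : ψ '' X.carrier h₀ = X.carrier h₀ := by
      rw [← image_carrier hψadj, hψh0]
    have hcarc : ψ '' X.carrier h₀ᶜ = X.carrier h₀ᶜ := by
      have : ψ '' h₀ᶜ = h₀ᶜ := by rw [image_compl, hψh0]
      rw [← image_carrier hψadj, this]
    have hsymm_car : ⇑ψ.symm '' X.carrier h₀ = X.carrier h₀ := by
      conv_lhs => rw [← hcar]
      rw [Equiv.symm_image_image]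
    have hsymm_carc : ⇑ψ.symm '' X.carrier h₀ᶜ = X.carrier h₀ᶜ := by
      conv_lhs => rw [← hcarc]
      rw [Equiv.symm_image_image]
    constructor
    · rcases hx with hx | hx
      · refine Or.inl ?_
        have hm : ψ x ∈ ⇑ψ '' X.carrier h₀ := Set.mem_image_of_mem _ hx
        rwa [hcar] at hm
      · refine Or.inr ?_
        have hm : ψ x ∈ ⇑ψ '' X.carrier h₀ᶜ := Set.mem_image_of_mem _ hx
        rwa [hcarc] at hm
    · rcases hx with hx | hx
      · refine Or.inl ?_
        have hm : ψ.symm x ∈ ⇑ψ.symm '' X.carrier h₀ := Set.mem_image_of_mem _ hx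
        rwa [hsymm_car] at hm
      · refine Or.inr ?_
        have hm : ψ.symm x ∈ ⇑ψ.symm '' X.carrier h₀ᶜ := Set.mem_image_of_mem _ hx
        rwa [hsymm_carc] at hm
  have hrec : ∀ m : ℤ, (∃ x ∈ C, nd X x (L.f m) ≤ M) →
      (∃ x ∈ C, nd X x (L.f (m + cc)) ≤ M) ∧ (∃ x ∈ C, nd X x (L.f (m - cc)) ≤ M) := by
    rintro m ⟨x, hx, hxnd⟩
    constructor
    · refine ⟨ψ x, (hCinv x hx).1, ?_⟩
      have h1 : nd X (ψ x) (ψ (L.f m)) = nd X x (L.f m) := nd_map L.hconn hψadj _ _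
      rw [hψf m] at h1
      omega
    · refine ⟨ψ.symm x, (hCinv x hx).2, ?_⟩
      have hsf : ψ.symm (L.f m) = L.f (m - cc) := by
        rw [Equiv.symm_apply_eq, hψf]
        congr 1
        ring
      have h1 : nd X (ψ.symm x) (ψ.symm (L.f m)) = nd X x (L.f m) :=
        nd_map L.hconn (adjpres_symm hψadj) _ _
      rw [hsf] at h1
      omega
  obtain ⟨x₀, hx₀, p₀, hx₀p, -⟩ := hfar 0
  have hall : ∀ j : ℤ, ∃ x ∈ C, nd X x (L.f (p₀ + j * cc)) ≤ M := by
    intro j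
    induction j using Int.induction_on with
    | zero => exact ⟨x₀, hx₀, by simpa using hx₀p⟩
    | succ j ih =>
      obtain ⟨x, hx, hn'⟩ := (hrec _ ih).1
      refine ⟨x, hx, ?_⟩
      have he : p₀ + (j + 1 : ℤ) * cc = p₀ + j * cc + cc := by ring
      rwa [he]
    | pred j ih =>
      obtain ⟨x, hx, hn'⟩ := (hrec _ ih).2
      refine ⟨x, hx, ?_⟩
      have he : p₀ + (-j - 1 : ℤ) * cc = p₀ + (-j : ℤ) * cc - cc := by ring
      rwa [he]
  -- contradiction with essentiality
  obtain ⟨w, hwmem, hwfar⟩ := L.ess_nd hh (cc.natAbs + 4 * M + 1)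
  obtain ⟨mw, hmw⟩ := L.hM w
  have hex : ∃ j : ℤ, (mw - (p₀ + j * cc)).natAbs ≤ cc.natAbs := by
    refine ⟨(mw - p₀) / cc, ?_⟩
    have hmod := Int.mul_ediv_add_emod (mw - p₀) cc
    have hcomm : cc * ((mw - p₀) / cc) = ((mw - p₀) / cc) * cc := mul_comm _ _
    have hlow := Int.emod_nonneg (mw - p₀) hcne
    have hup : (mw - p₀) % cc < |cc| := by rw [Int.abs_eq_natAbs]; exact Int.emod_lt (mw - p₀) hcne
    have habs : |cc| = cc.natAbs := Int.abs_eq_natAbs cc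
    omega
  obtain ⟨j, hj⟩ := hex
  obtain ⟨x, hxC2, hnd2⟩ := hall j
  obtain ⟨y, hdual⟩ := mem_C_dual hxC2
  have hfar2 := hwfar x y hdual
  have ht1 : nd X w x ≤ nd X w (L.f mw) + nd X (L.f mw) x := nd_triangle L.hconn _ _ _
  have ht2 : nd X (L.f mw) x ≤ nd X (L.f mw) (L.f (p₀ + j * cc)) +
      nd X (L.f (p₀ + j * cc)) x := nd_triangle L.hconn _ _ _
  have ht3 : nd X (L.f (p₀ + j * cc)) x = nd X x (L.f (p₀ + j * cc)) :=
    nd_symm L.hsym L.hconn _ _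
  have ht4 := L.hf mw (p₀ + j * cc)
  omega

theorem C_image {e : X.V ≃ X.V} (he : AdjPres X e) (k : Set X.V) :
    X.carrier (e '' k) ∪ X.carrier (e '' k)ᶜ = e '' (X.carrier k ∪ X.carrier kᶜ) := by
  rw [Set.image_union, image_carrier he, ← image_compl, image_carrier he]

theorem uniform_D (L : LCtx X) (hlf : X.LocFin) (hcc : X.Cocompact)
    (hinv : ∀ g : X.AutCC, ∀ n : ℤ, g.e (L.f n) ∈ Set.range L.f) :
    ∃ D : ℕ, ∀ h ∈ X.HS, ∀ u ∈ X.carrier h ∪ X.carrier hᶜ,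
      ∀ v ∈ X.carrier h ∪ X.carrier hᶜ, nd X u v ≤ D := by
  classical
  obtain ⟨F, hFfin, hF⟩ := hcc
  set EFin : Set (X.V × X.V) := {q | q.1 ∈ F ∧ X.adj q.1 q.2} with hEFdef
  have hEFin : EFin.Finite := by
    have hsub : EFin ⊆ ⋃ a ∈ F, (fun z => (a, z)) '' {z | X.adj a z} := by
      rintro ⟨a, z⟩ ⟨h1, h2⟩
      exact Set.mem_biUnion h1 ⟨z, h2, rfl⟩
    exact (Set.Finite.biUnion hFfin (fun a _ => (hlf a).image _)).subset hsub
  haveI : Finite ↥EFin := hEFin.to_subtype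
  have hDq := fun (q : ↥EFin) => bounded_C L hlf ⟨F, hFfin, hF⟩ hinv (L.wall_mem q.2.2)
  choose T hT using hDq
  obtain ⟨D, hD⟩ := (Set.finite_range T).bddAbove
  refine ⟨D, fun h hh u hu v hv => ?_⟩
  obtain ⟨y, hdual⟩ := mem_C_dual hu
  obtain ⟨g, a, haF, hga⟩ := hF u
  set b := g.e.symm y with hbdef
  have hadj_ab : X.adj a b := by
    have h1 : X.adj (g.e a) (g.e b) := by
      rw [hga, hbdef, Equiv.apply_symm_apply]
      exact hdual.1
    exact (g.adj_iff a b).mp h1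
  set q : ↥EFin := ⟨(a, b), haF, hadj_ab⟩ with hqdef
  set k := L.wall hadj_ab with hkdef
  have hkq : L.wall q.2.2 = k := rfl
  have himg : g.e '' k ∈ X.HS := g.hs k (L.wall_mem hadj_ab)
  have huk : u ∈ g.e '' k := ⟨a, L.wall_src hadj_ab, hga⟩
  have hyk : y ∉ g.e '' k := by
    rintro ⟨b', hb', hb'e⟩
    have hbb : b' = b := by
      apply g.e.injective
      rw [hb'e, hbdef, Equiv.apply_symm_apply]
    have hbk : b ∈ k := hbb ▸ hb'
    rw [hkdef] at hbk
    exact L.wall_tgt hadj_ab hbk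
  have hor : g.e '' k = h ∨ g.e '' k = hᶜ := by
    rcases hdual.2 with ⟨hxh, hyh⟩ | ⟨hyh, hxh⟩
    · left
      have h1 := L.wall_uniq hdual.1 hh hxh hyh
      have h2 := L.wall_uniq hdual.1 himg huk hyk
      rw [h2, ← h1]
    · right
      have hxh' : u ∈ hᶜ := by simpa using hxh
      have hyh' : y ∉ hᶜ := by simpa using hyh
      have h1 := L.wall_uniq hdual.1 (L.hcompl h hh) hxh' hyh'
      have h2 := L.wall_uniq hdual.1 himg huk hyk
      rw [h2, ← h1]
  have hCeq : X.carrier h ∪ X.carrier hᶜ = g.e '' (X.carrier k ∪ X.carrier kᶜ) := by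
    rcases hor with hor | hor
    · rw [← hor]
      exact C_image g.adj_iff k
    · rw [← C_compl h, ← hor]
      exact C_image g.adj_iff k
  rw [hCeq] at hu hv
  obtain ⟨u', hu', rfl⟩ := hu
  obtain ⟨v', hv', rfl⟩ := hv
  rw [nd_map L.hconn g.adj_iff]
  exact le_trans (hT q u' hu' v' hv') (hD ⟨q, rfl⟩)

theorem ivt_aux (A : ℤ → Prop) : ∀ N : ℕ, ∀ a b : ℤ, (b - a).natAbs ≤ N → a ≤ b →
    A a → ¬ A b → ∃ i, a ≤ i ∧ i < b ∧ A i ∧ ¬ A (i + 1) := by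
  intro N
  induction N with
  | zero =>
    intro a b h1 h2 ha hb
    have : a = b := by omega
    exact absurd (this ▸ ha) hb
  | succ N ih =>
    intro a b h1 h2 ha hb
    rcases eq_or_lt_of_le h2 with rfl | hlt
    · exact absurd ha hb
    · by_cases hA : A (a + 1)
      · obtain ⟨i, hi1, hi2, hi3, hi4⟩ := ih (a + 1) b (by omega) (by omega) hA hb
        exact ⟨i, by omega, hi2, hi3, hi4⟩
      · exact ⟨a, le_refl a, hlt, ha, hA⟩

theorem ivt (A : ℤ → Prop) {a b : ℤ} (hab : a ≤ b) (ha : A a) (hb : ¬ A b) :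
    ∃ i, a ≤ i ∧ i < b ∧ A i ∧ ¬ A (i + 1) :=
  ivt_aux A (b - a).natAbs a b le_rfl hab ha hb

theorem ivt2 (A : ℤ → Prop) {a b : ℤ} (ha : A a) (hb : ¬ A b) :
    ∃ i, min a b ≤ i ∧ i < max a b ∧ ¬ (A i ↔ A (i + 1)) := by
  rcases le_or_gt a b with h | h
  · obtain ⟨i, h1, h2, h3, h4⟩ := ivt A h ha hb
    exact ⟨i, by omega, by omega, by tauto⟩
  · obtain ⟨i, h1, h2, h3, h4⟩ := ivt (fun i => ¬ A i) (le_of_lt h) hb (by simpa using ha)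
    exact ⟨i, by omega, by omega, by tauto⟩

/-- full context: line + uniform hyperplane-diameter bound -/
structure DCtx (X : CCC) extends LCtx X where
  D : ℕ
  hD : ∀ h ∈ X.HS, ∀ u ∈ X.carrier h ∪ X.carrier hᶜ,
      ∀ v ∈ X.carrier h ∪ X.carrier hᶜ, nd X u v ≤ D

variable {K : DCtx X}

def DCtx.Xing (K : DCtx X) (h : Set X.V) : Set ℤ :=
  {i | ¬ (K.f i ∈ h ↔ K.f (i + 1) ∈ h)}

theorem xing_compl {h : Set X.V} {i : ℤ} : i ∈ K.Xing hᶜ ↔ i ∈ K.Xing h := by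
  simp only [DCtx.Xing, Set.mem_setOf_eq, Set.mem_compl_iff]
  tauto

theorem xing_dual {h : Set X.V} {i : ℤ} (hi : i ∈ K.Xing h) :
    X.DualTo h (K.f i) (K.f (i + 1)) := by
  refine ⟨K.adj_line' i, ?_⟩
  simp only [DCtx.Xing, Set.mem_setOf_eq] at hi
  tauto

theorem xing_memC {h : Set X.V} {i : ℤ} (hi : i ∈ K.Xing h) :
    K.f i ∈ X.carrier h ∪ X.carrier hᶜ ∧ K.f (i + 1) ∈ X.carrier h ∪ X.carrier hᶜ :=
  dual_mem_C K.hsym (xing_dual hi)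

theorem line_meets {h : Set X.V} (hh : h ∈ X.HS) : ∃ i : ℤ, K.f i ∈ h := by
  by_contra hno
  push_neg at hno
  obtain ⟨w, hw, hfarw⟩ := K.ess_nd hh K.M
  obtain ⟨m, hm⟩ := K.hM w
  obtain ⟨a, b, hd, _, _, hnda⟩ := cross_nd K.hconn hw (hno m)
  have := hfarw a b hd
  omega

theorem xing_nonempty {h : Set X.V} (hh : h ∈ X.HS) : ∃ i, i ∈ K.Xing h := by
  obtain ⟨i, hi⟩ := line_meets (K := K) hh
  obtain ⟨j, hj⟩ := line_meets (K := K) (K.hcompl h hh)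
  have hj' : K.f j ∉ h := hj
  obtain ⟨l, _, _, hl⟩ := ivt2 (fun i => K.f i ∈ h) hi hj'
  exact ⟨l, hl⟩

noncomputable def DCtx.q (K : DCtx X) {h : Set X.V} (hh : h ∈ X.HS) : ℤ :=
  (xing_nonempty (K := K) hh).choose

theorem q_mem {h : Set X.V} (hh : h ∈ X.HS) : K.q hh ∈ K.Xing h :=
  (xing_nonempty (K := K) hh).choose_spec

theorem xing_near {h : Set X.V} (hh : h ∈ X.HS) {i : ℤ} (hi : i ∈ K.Xing h) :
    (i - K.q hh).natAbs ≤ K.D := by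
  have h1 := (xing_memC (K := K) hi).1
  have h2 := (xing_memC (K := K) (q_mem (K := K) hh)).1
  have := K.hD h hh _ h1 _ h2
  rw [K.hf] at this
  exact this

theorem side_const {h : Set X.V} (hh : h ∈ X.HS) {i j : ℤ}
    (hij : (K.q hh + K.D < i ∧ K.q hh + K.D < j) ∨ (i < K.q hh - K.D ∧ j < K.q hh - K.D)) :
    (K.f i ∈ h ↔ K.f j ∈ h) := by
  by_contra hc
  have : (K.f i ∈ h ∧ K.f j ∉ h) ∨ (K.f j ∈ h ∧ K.f i ∉ h) := by tauto
  obtain ⟨l, hl1, hl2, hl3⟩ : ∃ l, min i j ≤ l ∧ l < max i j ∧ l ∈ K.Xing h := by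
    rcases this with ⟨h1, h2⟩ | ⟨h1, h2⟩
    · obtain ⟨l, a, b, c⟩ := ivt2 (fun i => K.f i ∈ h) h1 h2
      exact ⟨l, a, b, c⟩
    · obtain ⟨l, a, b, c⟩ := ivt2 (fun i => K.f i ∈ h) h1 h2
      exact ⟨l, by omega, by omega, c⟩
  have := xing_near hh hl3
  omega

def DCtx.Up (K : DCtx X) {h : Set X.V} (hh : h ∈ X.HS) : Prop :=
  K.f (K.q hh + K.D + 1) ∈ h

theorem mem_up_iff {h : Set X.V} (hh : h ∈ X.HS) {i : ℤ} (hi : K.q hh + K.D < i) :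
    (K.f i ∈ h ↔ K.Up hh) :=
  side_const hh (Or.inl ⟨hi, by omega⟩)

theorem up_xor_low {h : Set X.V} (hh : h ∈ X.HS) {i : ℤ} (hi : i < K.q hh - K.D) :
    (K.f i ∈ h ↔ ¬ K.Up hh) := by
  have hconst := side_const (K := K) hh (Or.inr ⟨hi, show K.q hh - K.D - 1 < K.q hh - K.D by omega⟩)
  rw [hconst]
  set j := K.q hh - K.D - 1 with hjdef
  constructor
  · -- if low side in h and Up h, then hᶜ is trapped near q
    intro hj hup
    obtain ⟨w, hw, hfarw⟩ := K.ess_nd (K.hcompl h hh) (K.M + K.D)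
    obtain ⟨m, hm⟩ := K.hM w
    have hqd : X.DualTo hᶜ (K.f (K.q hh)) (K.f (K.q hh + 1)) :=
      dual_compl.mpr (xing_dual (q_mem hh))
    rcases lt_trichotomy m (K.q hh - K.D) with hc | hc | hc
    · have hfm : K.f m ∈ h :=
        (side_const hh (Or.inr ⟨hc, show j < K.q hh - K.D by omega⟩)).mpr hj
      have hwcompl : w ∈ hᶜ := hw
      obtain ⟨a, b, hd, _, _, hnda⟩ := cross_nd K.hconn hwcompl (show K.f m ∉ hᶜ by simpa using hfm)
      have := hfarw a b hd
      omega
    · have := hfarw _ _ hqd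
      have ht : nd X w (K.f (K.q hh)) ≤ nd X w (K.f m) + nd X (K.f m) (K.f (K.q hh)) :=
        nd_triangle K.hconn _ _ _
      rw [K.hf] at ht
      omega
    · rcases lt_or_ge (K.q hh + K.D) m with hc2 | hc2
      · have hfm : K.f m ∈ h := (mem_up_iff hh hc2).mpr hup
        obtain ⟨a, b, hd, _, _, hnda⟩ := cross_nd K.hconn (show (w : X.V) ∈ hᶜ from hw)
          (show K.f m ∉ hᶜ by simpa using hfm)
        have := hfarw a b hd
        omega
      · have := hfarw _ _ hqd
        have ht : nd X w (K.f (K.q hh)) ≤ nd X w (K.f m) + nd X (K.f m) (K.f (K.q hh)) :=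
          nd_triangle K.hconn _ _ _
        rw [K.hf] at ht
        omega
  · -- if low side not in h and not Up h, then h is trapped near q
    intro hnup
    by_contra hj
    obtain ⟨w, hw, hfarw⟩ := K.ess_nd hh (K.M + K.D)
    obtain ⟨m, hm⟩ := K.hM w
    have hqd : X.DualTo h (K.f (K.q hh)) (K.f (K.q hh + 1)) := xing_dual (q_mem hh)
    rcases lt_trichotomy m (K.q hh - K.D) with hc | hc | hc
    · have hfm : K.f m ∉ h := fun hmem =>
        hj ((side_const hh (Or.inr ⟨show j < K.q hh - K.D by omega, hc⟩)).mpr hmem)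
      obtain ⟨a, b, hd, _, _, hnda⟩ := cross_nd K.hconn hw hfm
      have := hfarw a b hd
      omega
    · have := hfarw _ _ hqd
      have ht : nd X w (K.f (K.q hh)) ≤ nd X w (K.f m) + nd X (K.f m) (K.f (K.q hh)) :=
        nd_triangle K.hconn _ _ _
      rw [K.hf] at ht
      omega
    · rcases lt_or_ge (K.q hh + K.D) m with hc2 | hc2
      · have hfm : K.f m ∉ h := fun hmem => hnup ((mem_up_iff hh hc2).mp hmem)
        obtain ⟨a, b, hd, _, _, hnda⟩ := cross_nd K.hconn hw hfm
        have := hfarw a b hd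
        omega
      · have := hfarw _ _ hqd
        have ht : nd X w (K.f (K.q hh)) ≤ nd X w (K.f m) + nd X (K.f m) (K.f (K.q hh)) :=
          nd_triangle K.hconn _ _ _
        rw [K.hf] at ht
        omega

theorem up_compl {h : Set X.V} (hh : h ∈ X.HS) :
    K.Up (K.hcompl h hh) ↔ ¬ K.Up hh := by
  set i := max (K.q (K.hcompl h hh) + K.D) (K.q hh + K.D) + 1 with hidef
  have h1 : (K.f i ∈ hᶜ ↔ K.Up (K.hcompl h hh)) := mem_up_iff _ (by omega)
  have h2 : (K.f i ∈ h ↔ K.Up hh) := mem_up_iff _ (by omega)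
  rw [← h1, ← h2]
  simp

theorem pos_bound_notmem {h : Set X.V} (hh : h ∈ X.HS) (hup : K.Up hh) {x : X.V} {m : ℤ}
    (hm : nd X x (K.f m) ≤ K.M) (hx : x ∉ h) : m ≤ K.q hh + K.D + 2 * K.M := by
  by_contra hbig
  push_neg at hbig
  have hfm : K.f m ∈ h := (mem_up_iff hh (by omega)).mpr hup
  obtain ⟨a, b, hd, hah, _, hnda⟩ := cross_nd K.hconn (show x ∈ hᶜ from hx)
    (show K.f m ∉ hᶜ by simpa using hfm)
  have haC : a ∈ X.carrier h ∪ X.carrier hᶜ := (dual_mem_C K.hsym (dual_compl.mp hd)).1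
  have hqC : K.f (K.q hh) ∈ X.carrier h ∪ X.carrier hᶜ := (xing_memC (K := K) (q_mem (K := K) hh)).1
  have hD1 : nd X a (K.f (K.q hh)) ≤ K.D := by
    have := K.hD h hh _ haC _ hqC
    exact this
  have ht1 : nd X (K.f m) (K.f (K.q hh)) ≤ nd X (K.f m) x + nd X x (K.f (K.q hh)) :=
    nd_triangle K.hconn _ _ _
  have ht2 : nd X x (K.f (K.q hh)) ≤ nd X x a + nd X a (K.f (K.q hh)) :=
    nd_triangle K.hconn _ _ _
  have hsy : nd X (K.f m) x = nd X x (K.f m) := nd_symm K.hsym K.hconn _ _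
  have hfq := K.hf m (K.q hh)
  omega

theorem pos_bound_mem {h : Set X.V} (hh : h ∈ X.HS) (hup : K.Up hh) {x : X.V} {m : ℤ}
    (hm : nd X x (K.f m) ≤ K.M) (hx : x ∈ h) : K.q hh - K.D - 2 * K.M ≤ m := by
  by_contra hbig
  push_neg at hbig
  have hfm : K.f m ∉ h := fun hmem => (up_xor_low hh (by omega)).mp hmem hup
  obtain ⟨a, b, hd, hah, _, hnda⟩ := cross_nd K.hconn hx hfm
  have haC : a ∈ X.carrier h ∪ X.carrier hᶜ := (dual_mem_C K.hsym hd).1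
  have hqC : K.f (K.q hh) ∈ X.carrier h ∪ X.carrier hᶜ := (xing_memC (K := K) (q_mem (K := K) hh)).1
  have hD1 : nd X a (K.f (K.q hh)) ≤ K.D := K.hD h hh _ haC _ hqC
  have ht1 : nd X (K.f m) (K.f (K.q hh)) ≤ nd X (K.f m) x + nd X x (K.f (K.q hh)) :=
    nd_triangle K.hconn _ _ _
  have ht2 : nd X x (K.f (K.q hh)) ≤ nd X x a + nd X a (K.f (K.q hh)) :=
    nd_triangle K.hconn _ _ _
  have hsy : nd X (K.f m) x = nd X x (K.f m) := nd_symm K.hsym K.hconn _ _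
  have hfq := K.hf m (K.q hh)
  omega

theorem nest {h k : Set X.V} (hh : h ∈ X.HS) (hk : k ∈ X.HS)
    (huph : K.Up hh) (hupk : K.Up hk)
    (hqq : K.q hh + 2 * K.D + 4 * K.M + 2 ≤ K.q hk) : k ⊂ h := by
  have hsub : k ⊆ h := by
    intro x hxk
    obtain ⟨m, hm⟩ := K.hM x
    have hlow := pos_bound_mem hk hupk hm hxk
    by_contra hxh
    have := pos_bound_notmem hh huph hm hxh
    omega
  have hwit : K.f (K.q hh + K.D + 1) ∈ h ∧ K.f (K.q hh + K.D + 1) ∉ k := by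
    constructor
    · exact (mem_up_iff hh (by omega)).mpr huph
    · intro hmem
      exact (up_xor_low hk (by omega)).mp hmem hupk
  exact ⟨hsub, fun hsup => hwit.2 (hsup hwit.1)⟩

theorem nest_rev {h k : Set X.V} (hh : h ∈ X.HS) (hk : k ∈ X.HS)
    (huph : K.Up hh) (hupk : K.Up hk) (hsub : k ⊆ h) :
    K.q hh - 2 * K.D - 1 ≤ K.q hk := by
  by_contra hc
  push_neg at hc
  have h1 : K.f (K.q hk + K.D + 1) ∈ k := (mem_up_iff hk (by omega)).mpr hupk
  have h2 : K.f (K.q hk + K.D + 1) ∉ h := fun hmem =>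
    (up_xor_low hh (by omega)).mp hmem huph
  exact h2 (hsub h1)

theorem up_wall_at (K : DCtx X) (n : ℤ) :
    ∃ k, ∃ hk : k ∈ X.HS, K.Up hk ∧ (n - K.q hk).natAbs ≤ K.D := by
  classical
  set h := K.wall (K.adj_line n) with hhdef
  have hh : h ∈ X.HS := K.wall_mem (K.adj_line n)
  have hx : n ∈ K.Xing h := by
    have h1 : K.f (n + 1) ∈ h := K.wall_src (K.adj_line n)
    have h2 : K.f n ∉ h := K.wall_tgt (K.adj_line n)
    simp only [DCtx.Xing, Set.mem_setOf_eq]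
    tauto
  by_cases hup : K.Up hh
  · exact ⟨h, hh, hup, xing_near hh hx⟩
  · refine ⟨hᶜ, K.hcompl h hh, (up_compl hh).mpr hup, ?_⟩
    exact xing_near (K.hcompl h hh) (xing_compl.mpr hx)

def DCtx.alpha (K : DCtx X) : Set (Set X.V) := {h | ∃ hh : h ∈ X.HS, K.Up hh}

theorem alpha_sub : K.alpha ⊆ X.HS := fun _ hh => hh.choose

theorem alpha_compl_iff {h : Set X.V} (hh : h ∈ X.HS) :
    h ∈ K.alpha ↔ hᶜ ∉ K.alpha := by
  constructor
  · rintro ⟨hh', hup⟩ ⟨hhc, hupc⟩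
    have h1 : K.Up (K.hcompl h hh) := hupc
    exact (up_compl hh).mp h1 hup
  · intro hnc
    refine ⟨hh, ?_⟩
    by_contra hnup
    exact hnc ⟨K.hcompl h hh, (up_compl hh).mpr hnup⟩

theorem alpha_upward {h k : Set X.V} (hha : h ∈ K.alpha) (hk : k ∈ X.HS) (hsub : h ⊆ k) :
    k ∈ K.alpha := by
  obtain ⟨hh, hup⟩ := hha
  refine ⟨hk, ?_⟩
  set i := max (K.q hh + K.D) (K.q hk + K.D) + 1 with hidef
  have h1 : K.f i ∈ h := (mem_up_iff hh (by omega)).mpr hup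
  exact (mem_up_iff hk (by omega)).mp (hsub h1)

theorem alpha_ultra : X.IsUltra K.alpha :=
  ⟨alpha_sub, fun h hh => alpha_compl_iff hh, fun h hha k hk hsub => alpha_upward hha hk hsub⟩

theorem alpha_nt : ∀ h ∈ K.alpha, ∃ k ∈ K.alpha, k ⊂ h := by
  rintro h ⟨hh, hup⟩
  obtain ⟨k, hk, hupk, hnear⟩ := up_wall_at K (K.q hh + 3 * K.D + 4 * K.M + 2)
  refine ⟨k, ⟨hk, hupk⟩, nest hh hk hup hupk (by omega)⟩

theorem nt_chain {β : Set (Set X.V)} (hnt : ∀ h ∈ β, ∃ k ∈ β, k ⊂ h)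
    (hne : ∃ h, h ∈ β) : X.InRoller β := by
  obtain ⟨h₀, hh₀⟩ := hne
  have h' : ∀ s : {s : Set X.V // s ∈ β}, ∃ t : {s : Set X.V // s ∈ β}, t.1 ⊂ s.1 := by
    rintro ⟨w, hw⟩
    obtain ⟨k, hk, hlt⟩ := hnt w hw
    exact ⟨⟨k, hk⟩, hlt⟩
  choose Fn hFn using h'
  refine ⟨fun n => (Nat.rec ⟨h₀, hh₀⟩ (fun _ p => Fn p) n : {s : Set X.V // s ∈ β}).1,
    fun n => (Nat.rec ⟨h₀, hh₀⟩ (fun _ p => Fn p) n : {s : Set X.V // s ∈ β}).2,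
    fun n => hFn _⟩

theorem alpha_nonempty : ∃ h, h ∈ K.alpha := by
  obtain ⟨k, hk, hupk, -⟩ := up_wall_at K 0
  exact ⟨k, hk, hupk⟩

theorem alpha_roller : X.InRoller K.alpha := nt_chain alpha_nt alpha_nonempty

theorem roller_eq_alpha (K : DCtx X) {α : Set (Set X.V)} (hu : X.IsUltra α)
    (c : ℕ → Set X.V) (hcα : ∀ n, c n ∈ α) (hdesc : ∀ n, c (n + 1) ⊂ c n)
    (hUinf : {n : ℕ | ∃ hh : c n ∈ X.HS, K.Up hh}.Infinite) : α = K.alpha := by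
  classical
  have hmem : ∀ n, c n ∈ X.HS := fun n => hu.1 (hcα n)
  have hstep : ∀ i d : ℕ, c (i + d + 1) ⊂ c i := by
    intro i d
    induction d with
    | zero => simpa using hdesc i
    | succ d ih =>
      have h1 : c (i + d + 1 + 1) ⊂ c (i + d + 1) := hdesc _
      have he : i + (d + 1) + 1 = i + d + 1 + 1 := by omega
      rw [he]
      exact h1.trans ih
  have hlt : ∀ i j : ℕ, i < j → c j ⊂ c i := by
    intro i j hij
    have h1 := hstep i (j - i - 1)
    have he : i + (j - i - 1) + 1 = j := by omega
    rwa [he] at h1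
  set U := {n : ℕ | ∃ hh : c n ∈ X.HS, K.Up hh} with hUdef
  have hqunb : ∀ B : ℤ, ∃ n ∈ U, B < K.q (hmem n) := by
    by_contra hbd
    push_neg at hbd
    obtain ⟨B, hB⟩ := hbd
    obtain ⟨n₀, hn₀⟩ := hUinf.nonempty
    have hlb : ∀ n, n ∈ U → n₀ ≤ n → K.q (hmem n₀) - 2 * K.D - 1 ≤ K.q (hmem n) := by
      intro n hn hge
      rcases eq_or_lt_of_le hge with heq | hltn
      · rw [← heq]; omega
      · exact nest_rev (hmem n₀) (hmem n) hn₀.choose_spec hn.choose_spec (hlt n₀ n hltn).1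
    set U' := U \ Set.Iio n₀ with hU'def
    have hU'inf : U'.Infinite := hUinf.diff (Set.finite_Iio n₀)
    haveI : Infinite ↥U' := hU'inf.to_subtype
    set lo := K.q (hmem n₀) - 2 * K.D - 1 with hlodef
    haveI : Finite ↥(Set.Icc lo B) := (Set.finite_Icc lo B).to_subtype
    have hbounds : ∀ n : ↥U', K.q (hmem n.1) ∈ Set.Icc lo B := by
      rintro ⟨n, hnU, hnlo⟩
      simp only [Set.mem_Iio, not_lt] at hnlo
      exact ⟨hlb n hnU hnlo, hB n hnU⟩
    set φ : ↥U' → ↥(Set.Icc lo B) × Bool := fun n =>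
      (⟨K.q (hmem n.1), hbounds n⟩,
        if K.f (K.q (hmem n.1)) ∈ c n.1 then true else false) with hφdef
    obtain ⟨x, y, hxy, hφ⟩ := Finite.exists_ne_map_eq_of_infinite φ
    have hq : K.q (hmem x.1) = K.q (hmem y.1) := by
      have := congrArg (fun z => (z.1 : ℤ)) hφ
      simpa [hφdef] using this
    have hside : (K.f (K.q (hmem x.1)) ∈ c x.1) ↔ (K.f (K.q (hmem y.1)) ∈ c y.1) := by
      have hb := congrArg Prod.snd hφ
      simp only [hφdef] at hb
      by_cases hA : K.f (K.q (hmem x.1)) ∈ c x.1 <;>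
        by_cases hB2 : K.f (K.q (hmem y.1)) ∈ c y.1 <;>
        simp [hA, hB2] at hb ⊢
    have hceq : c x.1 = c y.1 := by
      have hxa : K.q (hmem x.1) ∈ K.Xing (c x.1) := q_mem _
      have hxb : K.q (hmem x.1) ∈ K.Xing (c y.1) := by
        rw [hq]
        exact q_mem _
      have hside' : (K.f (K.q (hmem x.1)) ∈ c x.1) ↔ (K.f (K.q (hmem x.1)) ∈ c y.1) := by
        have h0 := hside
        rw [← hq] at h0
        exact h0
      by_cases hs : K.f (K.q (hmem x.1)) ∈ c x.1
      · have hsb : K.f (K.q (hmem x.1)) ∈ c y.1 := hside'.mp hs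
        have hna : K.f (K.q (hmem x.1) + 1) ∉ c x.1 := by
          simp only [DCtx.Xing, Set.mem_setOf_eq] at hxa
          tauto
        have hnb : K.f (K.q (hmem x.1) + 1) ∉ c y.1 := by
          simp only [DCtx.Xing, Set.mem_setOf_eq] at hxb
          tauto
        have h1 := K.wall_uniq (K.adj_line' (K.q (hmem x.1))) (hmem x.1) hs hna
        have h2 := K.wall_uniq (K.adj_line' (K.q (hmem x.1))) (hmem y.1) hsb hnb
        rw [h1, h2]
      · have hsb : K.f (K.q (hmem x.1)) ∉ c y.1 := fun hmm => hs (hside'.mpr hmm)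
        have hna : K.f (K.q (hmem x.1) + 1) ∈ c x.1 := by
          simp only [DCtx.Xing, Set.mem_setOf_eq] at hxa
          tauto
        have hnb : K.f (K.q (hmem x.1) + 1) ∈ c y.1 := by
          simp only [DCtx.Xing, Set.mem_setOf_eq] at hxb
          tauto
        have h1 := K.wall_uniq (K.adj_line (K.q (hmem x.1))) (hmem x.1) hna hs
        have h2 := K.wall_uniq (K.adj_line (K.q (hmem x.1))) (hmem y.1) hnb hsb
        rw [h1, h2]
    have hne : x.1 ≠ y.1 := fun he => hxy (Subtype.ext he)
    rcases lt_or_gt_of_ne hne with hl | hl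
    · exact (hlt x.1 y.1 hl).2 (hceq ▸ subset_rfl)
    · exact (hlt y.1 x.1 hl).2 (hceq ▸ subset_rfl)
  have hsup : K.alpha ⊆ α := by
    rintro k ⟨hk, hupk⟩
    obtain ⟨n, hnU, hq⟩ := hqunb (K.q hk + 2 * K.D + 4 * K.M + 2)
    have hnest : c n ⊂ k := nest hk (hmem n) hupk hnU.choose_spec (by omega)
    exact hu.2.2 (c n) (hcα n) k hk hnest.1
  ext x
  constructor
  · intro hxα
    by_contra hxa
    have hxHS : x ∈ X.HS := hu.1 hxα
    have hxc : xᶜ ∈ K.alpha := by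
      by_contra hc
      exact hxa ((alpha_compl_iff (K := K) hxHS).mpr hc)
    exact ((hu.2.1 x hxHS).mp hxα) (hsup hxc)
  · intro hxa
    exact hsup hxa

noncomputable def DCtx.mirror (K : DCtx X) : DCtx X where
  toCtx := K.toCtx
  f := fun n => K.f (-n)
  M := K.M
  hf := by
    intro m n
    rw [K.hf]
    omega
  hM := by
    intro v
    obtain ⟨n, hn⟩ := K.hM v
    exact ⟨-n, by simpa using hn⟩
  D := K.D
  hD := K.hD

theorem up_mirror (K : DCtx X) {h : Set X.V} (hh : h ∈ X.HS) :
    K.mirror.Up hh ↔ ¬ K.Up hh := by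
  set j := max (K.mirror.q hh + K.mirror.D + 1) (K.D + 1 - K.q hh) with hjdef
  have h1 : (K.mirror.f j ∈ h ↔ K.mirror.Up hh) := mem_up_iff (K := K.mirror) hh (by omega)
  have h2 : (K.f (-j) ∈ h ↔ ¬ K.Up hh) := up_xor_low hh (by
    have hDD : K.mirror.D = K.D := rfl
    omega)
  have h3 : K.mirror.f j = K.f (-j) := rfl
  rw [← h1, h3, h2]

theorem roller_main (K : DCtx X) {α : Set (Set X.V)} (hu : X.IsUltra α) (hr : X.InRoller α) :
    α = K.alpha ∨ α = K.mirror.alpha := by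
  obtain ⟨c, hcα, hdesc⟩ := hr
  by_cases hU : {n : ℕ | ∃ hh : c n ∈ X.HS, K.Up hh}.Infinite
  · exact Or.inl (roller_eq_alpha K hu c hcα hdesc hU)
  · refine Or.inr (roller_eq_alpha K.mirror hu c hcα hdesc ?_)
    have hcomp : ({n : ℕ | ∃ hh : c n ∈ X.HS, K.Up hh}ᶜ).Infinite :=
      (Set.not_infinite.mp hU).infinite_compl
    apply hcomp.mono
    intro n hn
    have hXn : c n ∈ X.HS := hu.1 (hcα n)
    have hnUp : ¬ K.Up hXn := fun hup => hn ⟨hXn, hup⟩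
    exact ⟨hXn, (up_mirror K hXn).mpr hnUp⟩

theorem ultra_differ {α β : Set (Set X.V)} (hα : X.IsUltra α) (hβ : X.IsUltra β)
    (hne : α ≠ β) : ∃ h, h ∈ α ∧ hᶜ ∈ β := by
  classical
  have hor : (¬ α ⊆ β) ∨ (¬ β ⊆ α) := by
    by_contra hc
    push_neg at hc
    exact hne (Set.Subset.antisymm hc.1 hc.2)
  rcases hor with hc | hc
  · obtain ⟨x, hxα, hxβ⟩ := Set.not_subset.mp hc
    refine ⟨x, hxα, ?_⟩
    have hxHS := hα.1 hxα
    by_contra hxc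
    exact hxβ ((hβ.2.1 x hxHS).mpr hxc)
  · obtain ⟨y, hyβ, hyα⟩ := Set.not_subset.mp hc
    have hyHS := hβ.1 hyβ
    refine ⟨yᶜ, ?_, by rwa [compl_compl]⟩
    by_contra hyc
    exact hyα ((hα.2.1 y hyHS).mpr hyc)

theorem part2 (K : DCtx X) :
    ∀ α : Set (Set X.V), X.IsUltra α → X.InRoller α → X.NonTerminating α := by
  intro α hu hr
  refine ⟨hu, ?_⟩
  rcases roller_main K hu hr with heq | heq
  · subst heq
    exact alpha_nt
  · subst heq
    exact alpha_nt

theorem part3 (K : DCtx X) :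
    {α : Set (Set X.V) | X.IsUltra α ∧ X.InRoller α} = {α : Set (Set X.V) | X.InBX α} := by
  ext α
  simp only [Set.mem_setOf_eq]
  constructor
  · rintro ⟨hu, hr⟩
    exact ⟨hu, fun H hH _ => ⟨α, part2 K α hu hr, hH⟩⟩
  · rintro ⟨hu, hB⟩
    refine ⟨hu, ?_⟩
    by_cases hA : α = K.alpha
    · subst hA
      exact alpha_roller
    by_cases hA' : α = K.mirror.alpha
    · subst hA'
      exact alpha_roller
    exfalso
    obtain ⟨h1, hh1, hh1c⟩ := ultra_differ hu (alpha_ultra (K := K)) hA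
    obtain ⟨h2, hh2, hh2c⟩ := ultra_differ hu (alpha_ultra (K := K.mirror)) hA'
    obtain ⟨β, ⟨hβu, hβnt⟩, hHβ⟩ := hB {h1, h2}
      (by
        intro z hz
        rcases hz with rfl | hz
        · exact hh1
        · rw [Set.mem_singleton_iff] at hz
          rw [hz]
          exact hh2)
      ((Set.finite_singleton h2).insert h1)
    have hβr : X.InRoller β := nt_chain hβnt ⟨h1, hHβ (by simp)⟩
    rcases roller_main K hβu hβr with heq | heq
    · have hm1 : h1 ∈ K.alpha := heq ▸ hHβ (by simp)
      have hHS1 : h1 ∈ X.HS := alpha_sub hm1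
      exact (alpha_compl_iff (K := K) hHS1).mp hm1 hh1c
    · have hm2 : h2 ∈ K.mirror.alpha := heq ▸ hHβ (by simp)
      have hHS2 : h2 ∈ X.HS := alpha_sub hm2
      exact (alpha_compl_iff (K := K.mirror) hHS2).mp hm2 hh2c

theorem caged_alpha (K : DCtx X) {α : Set (Set X.V)} (heq : α = K.alpha)
    (K' : Set (Set X.V)) (hsub : K' ⊆ α) (hcage : X.Cage K') :
    ∃ h ∈ X.HS, ∀ k ∈ K', X.HypIn h k := by
  obtain ⟨hK'HS, v₀, hv₀⟩ := hcage
  obtain ⟨pv, hpv⟩ := K.hM v₀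
  obtain ⟨h, hh, huph, hnear⟩ := up_wall_at K (pv + 6 * (K.M : ℤ) + 6 * (K.D : ℤ) + 6)
  refine ⟨h, hh, fun k hk => ?_⟩
  have hkα : k ∈ K.alpha := heq ▸ hsub hk
  obtain ⟨hkHS, hupk⟩ := hkα
  have hv₀k : v₀ ∈ X.carrier k := Set.mem_iInter₂.mp hv₀ k hk
  have hqkC : K.f (K.q hkHS) ∈ X.carrier k ∪ X.carrier kᶜ :=
    (xing_memC (K := K) (q_mem (K := K) hkHS)).1
  have h1 : nd X v₀ (K.f (K.q hkHS)) ≤ K.D := K.hD k hkHS _ (Or.inl hv₀k) _ hqkC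
  have hqk_le : K.q hkHS ≤ pv + (K.M : ℤ) + (K.D : ℤ) := by
    have ht : nd X (K.f pv) (K.f (K.q hkHS)) ≤ nd X (K.f pv) v₀ + nd X v₀ (K.f (K.q hkHS)) :=
      nd_triangle K.hconn _ _ _
    have hsy : nd X (K.f pv) v₀ = nd X v₀ (K.f pv) := nd_symm K.hsym K.hconn _ _
    have hfq := K.hf pv (K.q hkHS)
    omega
  have key : ∀ z, z ∈ X.carrier h ∪ X.carrier hᶜ → z ∈ k := by
    intro z hz
    obtain ⟨mz, hmz⟩ := K.hM z
    have h2 : nd X z (K.f (K.q hh)) ≤ K.D :=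
      K.hD h hh _ hz _ (xing_memC (K := K) (q_mem (K := K) hh)).1
    have h3 : K.q hh - (K.D : ℤ) - (K.M : ℤ) ≤ mz := by
      have ht : nd X (K.f mz) (K.f (K.q hh)) ≤ nd X (K.f mz) z + nd X z (K.f (K.q hh)) :=
        nd_triangle K.hconn _ _ _
      have hsy : nd X (K.f mz) z = nd X z (K.f mz) := nd_symm K.hsym K.hconn _ _
      have hfq := K.hf mz (K.q hh)
      omega
    by_contra hzk
    have := pos_bound_notmem hkHS hupk hmz hzk
    omega
  constructor
  · exact ⟨K.f (K.q hh), K.f (K.q hh + 1), xing_dual (q_mem (K := K) hh)⟩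
  · intro a b hd
    have hC := dual_mem_C K.hsym hd
    exact ⟨key a hC.1, key b hC.2⟩

theorem part4 (K : DCtx X) : X.CagedHyperplanes := by
  intro α hu hr K' hK' hcage
  rcases roller_main K hu hr with heq | heq
  · exact caged_alpha K heq K' hK' hcage
  · exact caged_alpha K.mirror heq K' hK' hcage

theorem no_tight (K : DCtx X) : ¬ ∃ S T : Set (Set X.V), X.IsTightCage S T := by
  rintro ⟨S, T, hS, hT, hSfin, hTfin, hT2, hmeet, hunb, hlast⟩
  have hTne : T.Nonempty := by
    rcases Set.eq_empty_or_nonempty T with rfl | h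
    · simp [Set.ncard_empty] at hT2
    · exact h
  obtain ⟨t, ht⟩ := hTne
  obtain ⟨u, hu, v, hv, hd⟩ := hunb K.D
  have huc : u ∈ X.carrier t := Set.mem_iInter₂.mp hu.1 t ht
  have hvc : v ∈ X.carrier t := Set.mem_iInter₂.mp hv.1 t ht
  have hnd := K.hD t (hT ht) u (Or.inl huc) v (Or.inl hvc)
  rw [edist_eq_nd K.hconn] at hd
  have : K.D < nd X u v := by exact_mod_cast hd
  omega

end S13
/-- for an essential, cocompact, locally finite, Euclidean
cube complex of Euclidean dimension 1: every hyperplane has finite diameter,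
every ultrafilter of ∂X is non-terminating, ∂X = B(X), X has caged
hyperplanes, and X contains no tight cage. -/
theorem stmt13 (X : CCC) (hX : X.IsCubical) (hess : X.Essential)
    (hcc : X.Cocompact) (hlf : X.LocFin)
    (hline : InvariantLine X) (hnoflat : ∀ n, 2 ≤ n → ¬ InvariantFlat X n) :
    (∀ h ∈ X.HS, ∃ D : ℕ, ∀ u ∈ X.carrier h ∪ X.carrier hᶜ,
      ∀ v ∈ X.carrier h ∪ X.carrier hᶜ, X.edist u v ≤ (D : ℕ∞)) ∧
    (∀ α : Set (Set X.V), X.IsUltra α → X.InRoller α → X.NonTerminating α) ∧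
    ({α : Set (Set X.V) | X.IsUltra α ∧ X.InRoller α} =
      {α : Set (Set X.V) | X.InBX α}) ∧
    X.CagedHyperplanes ∧
    ¬ ∃ S T : Set (Set X.V), X.IsTightCage S T := by
  obtain ⟨hsym, hirr, hcompl, hwall, hconn⟩ := hX
  obtain ⟨f, hfe, hinv⟩ := hline
  let c : S13.Ctx X := ⟨hsym, hcompl, hwall, hconn, hess⟩
  have hfnd : ∀ m n : ℤ, S13.nd X (f m) (f n) = (m - n).natAbs := by
    intro m n
    have h0 := hfe m n
    rw [S13.edist_eq_nd hconn] at h0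
    exact_mod_cast h0
  obtain ⟨M, hM⟩ := S13.exists_M c hcc hfe hinv
  let L : S13.LCtx X := { toCtx := c, f := f, M := M, hf := hfnd, hM := hM }
  obtain ⟨D, hD⟩ := S13.uniform_D L hlf hcc hinv
  let K : S13.DCtx X := { toLCtx := L, D := D, hD := hD }
  refine ⟨?_, S13.part2 K, S13.part3 K, S13.part4 K, S13.no_tight K⟩
  intro h hh
  refine ⟨D, fun u hu v hv => ?_⟩
  rw [S13.edist_eq_nd hconn]
  exact_mod_cast hD h hh u hu v hv
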